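/- For every nonnegative integer n and x ∈ (0,1), the identity Fₙ(x) = (1-x)^{n/2} Pₙ((2-x)/(2√(1-x))) holds, where Fₙ(x) = ₂F₁(-n, 1/2; 1; x) and Pₙ is the n-th Legendre polynomial. -/

import Mathlib

open scoped Nat

/-- Pochhammer symbol `(a)_j` for real `a`. -/
noncomputable def poch (a : ℝ) (j : ℕ) : ℝ := (ascPochhammer ℝ j).eval a

/-- The terminating hypergeometric polynomial `Fₙ(x) = ₂F₁(-n, 1/2; 1; x)`. -/
noncomputable def F (n : ℕ) (x : ℝ) : ℝ :=
  ∑ j ∈ Finset.range (n + 1),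
    poch (-(n : ℝ)) j * poch (1/2) j / ((j ! : ℝ) ^ 2) * x ^ j

/-- The `n`-th Legendre polynomial via the Rodrigues formula. -/
noncomputable def legendreP (n : ℕ) (y : ℝ) : ℝ :=
  (1 / (2 ^ n * (n ! : ℝ))) * iteratedDeriv n (fun t : ℝ => (t ^ 2 - 1) ^ n) y

open Polynomial Finset


lemma poch_succ (a : ℝ) (j : ℕ) : poch a (j+1) = poch a j * (a + j) := by
  unfold poch
  rw [ascPochhammer_succ_right]
  simp

lemma poch_neg_nat (n j : ℕ) (h : j ≤ n) :
    poch (-(n:ℝ)) j = (-1)^j * (n.descFactorial j : ℝ) := by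
  induction j with
  | zero => simp [poch]
  | succ j ih =>
    have hj : j ≤ n := Nat.le_of_succ_le h
    rw [poch_succ, ih hj, Nat.descFactorial_succ]
    have : ((n - j : ℕ) : ℝ) = (n : ℝ) - j := Nat.cast_sub hj
    push_cast [this]
    ring

lemma poch_half (j : ℕ) : (4:ℝ)^j * (j ! : ℝ) * poch (1/2) j = ((2*j)! : ℝ) := by
  induction j with
  | zero => simp [poch]
  | succ j ih =>
    rw [poch_succ]
    have h2 : (2*(j+1))! = (2*j+2) * ((2*j+1) * (2*j)!) := by
      rw [show 2*(j+1) = (2*j+1)+1 by ring, Nat.factorial_succ, Nat.factorial_succ]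
    rw [pow_succ]
    push_cast [h2, Nat.factorial_succ]
    linear_combination ((2*(j:ℝ)+2)*(2*j+1)) * ih

lemma iteratedDeriv_polyEval (k : ℕ) (p : ℝ[X]) :
    iteratedDeriv k (fun t : ℝ => p.eval t) = fun t => (derivative^[k] p).eval t := by
  induction k generalizing p with
  | zero => simp
  | succ k ih =>
    rw [iteratedDeriv_succ', Function.iterate_succ_apply]
    rw [show (deriv fun t : ℝ => p.eval t) = fun t => (derivative p).eval t from
      funext fun t => Polynomial.deriv p]
    exact ih (derivative p)

lemma desc_mul (n k : ℕ) (h : k ≤ n) :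
    n.descFactorial (n - k) * n.descFactorial k = n ! * n.choose k := by
  rw [Nat.descFactorial_eq_factorial_mul_choose, Nat.descFactorial_eq_factorial_mul_choose,
    Nat.choose_symm h]
  have := Nat.choose_mul_factorial_mul_factorial h
  calc (n-k)! * n.choose k * (k ! * n.choose k)
      = (n.choose k * k ! * (n-k)!) * n.choose k := by ring
    _ = n ! * n.choose k := by rw [this]

lemma legendreP_eq (n : ℕ) (y : ℝ) :
    legendreP n y
      = (1/2^n) * ∑ k ∈ Finset.range (n+1),
          (n.choose k : ℝ)^2 * (y-1)^k * (y+1)^(n-k) := by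
  have hfun : (fun t : ℝ => (t ^ 2 - 1) ^ n)
      = fun t : ℝ => (((X + C (-1 : ℝ))^n * (X + C (1:ℝ))^n : ℝ[X])).eval t := by
    funext t
    simp only [eval_mul, eval_pow, eval_add, eval_X, eval_C]
    rw [← mul_pow]
    congr 1
    ring
  have h1 : iteratedDeriv n (fun t : ℝ => (t^2-1)^n) y
      = (derivative^[n] ((X + C (-1:ℝ))^n * (X + C (1:ℝ))^n)).eval y := by
    rw [hfun, iteratedDeriv_polyEval]
  rw [legendreP, h1, Polynomial.iterate_derivative_mul, Polynomial.eval_finset_sum]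
  rw [Finset.mul_sum, Finset.mul_sum]
  refine Finset.sum_congr rfl fun k hk => ?_
  have hkn : k ≤ n := Nat.lt_succ_iff.mp (Finset.mem_range.mp hk)
  rw [Polynomial.iterate_derivative_X_add_pow, Polynomial.iterate_derivative_X_add_pow]
  rw [Nat.sub_sub_self hkn]
  simp only [smul_mul_assoc, mul_smul_comm, eval_smul, smul_eval, eval_mul, eval_pow,
    eval_add, eval_X, eval_C, nsmul_eq_mul, eval_natCast]
  have hd : ((n.descFactorial (n-k) : ℝ)) * (n.descFactorial k : ℝ) = (n ! : ℝ) * n.choose k := by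
    exact_mod_cast congrArg (Nat.cast : ℕ → ℝ) (desc_mul n k hkn)
  have hne : (n ! : ℝ) ≠ 0 := Nat.cast_ne_zero.mpr (Nat.factorial_ne_zero n)
  field_simp
  linear_combination ((y - 1)^k * (y+1)^(n-k) * (n.choose k : ℝ)) * hd

lemma coeff_pow_form (n : ℕ) (p q : ℝ) :
    ((((X + C (-p))^2 + C q * X : ℝ[X]))^n).coeff n
      = ∑ k ∈ Finset.range (n+1),
          (n.choose k : ℝ) * q^(n-k) * ((-p)^k * ((2*k).choose k)) := by
  rw [add_pow, Polynomial.finset_sum_coeff]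
  refine Finset.sum_congr rfl fun k hk => ?_
  have hkn : k ≤ n := Nat.lt_succ_iff.mp (Finset.mem_range.mp hk)
  have hterm : (((X + C (-p) : ℝ[X])^2)^k * (C q * X)^(n-k) * ((n.choose k : ℕ) : ℝ[X]))
      = C (q^(n-k) * ((n.choose k : ℕ) : ℝ)) * (X^(n-k) * (X + C (-p))^(2*k)) := by
    rw [← pow_mul, ← Polynomial.C_eq_natCast, map_mul, map_pow]
    ring
  rw [hterm, Polynomial.coeff_C_mul]
  have hc := Polynomial.coeff_X_pow_mul ((X + C (-p) : ℝ[X])^(2*k)) (n-k) k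
  rw [Nat.add_sub_cancel' hkn] at hc
  rw [hc, Polynomial.coeff_X_add_C_pow, show 2*k - k = k by omega]
  ring

lemma coeff_mul_form (n : ℕ) (a b : ℝ) :
    ((((X + C a) * (X + C b) : ℝ[X]))^n).coeff n
      = ∑ k ∈ Finset.range (n+1),
          (a^(n-k) * (n.choose k : ℝ)) * (b^(n-(n-k)) * ((n.choose (n-k)) : ℝ)) := by
  rw [mul_pow, Polynomial.coeff_mul, Finset.Nat.sum_antidiagonal_eq_sum_range_succ_mk]
  refine Finset.sum_congr rfl fun k hk => ?_
  rw [Polynomial.coeff_X_add_C_pow, Polynomial.coeff_X_add_C_pow]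

lemma key (n : ℕ) (u v : ℝ) :
    ∑ k ∈ Finset.range (n+1),
        (n.choose k : ℝ) * ((u+v)^2)^(n-k) * ((-(u*v))^k * ((2*k).choose k))
  = ∑ k ∈ Finset.range (n+1),
        ((u^2)^(n-k) * (n.choose k : ℝ)) * ((v^2)^(n-(n-k)) * ((n.choose (n-k)) : ℝ)) := by
  have hAB : ((X + C (-(u*v)))^2 + C ((u+v)^2) * X : ℝ[X])
      = (X + C (u^2)) * (X + C (v^2)) := by
    simp only [map_neg, map_mul, map_add, map_pow]
    ring
  calc ∑ k ∈ Finset.range (n+1),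
        (n.choose k : ℝ) * ((u+v)^2)^(n-k) * ((-(u*v))^k * ((2*k).choose k))
      = ((((X + C (-(u*v)))^2 + C ((u+v)^2) * X : ℝ[X]))^n).coeff n :=
        (coeff_pow_form n (u*v) ((u+v)^2)).symm
    _ = ((((X + C (u^2)) * (X + C (v^2)) : ℝ[X]))^n).coeff n := by rw [hAB]
    _ = _ := coeff_mul_form n (u^2) (v^2)

lemma F_term (n j : ℕ) (hj : j ≤ n) (x : ℝ) :
    poch (-(n:ℝ)) j * poch (1/2) j / ((j ! : ℝ)^2) * x^j
      = (n.choose j : ℝ) * (((2*j).choose j : ℝ) * (-x)^j) / 4^j := by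
  have hfne : (j ! : ℝ) ≠ 0 := Nat.cast_ne_zero.mpr (Nat.factorial_ne_zero j)
  have h4ne : (4:ℝ)^j ≠ 0 := by positivity
  have hP : poch (1/2) j = ((2*j)! : ℝ) / (4^j * j !) := by
    rw [eq_div_iff (by positivity)]
    linear_combination poch_half j
  have hD : (n.descFactorial j : ℝ) = (j ! : ℝ) * n.choose j := by
    exact_mod_cast congrArg (Nat.cast : ℕ → ℝ) (Nat.descFactorial_eq_factorial_mul_choose n j)
  have hC : ((2*j).choose j : ℝ) * j ! * j ! = ((2*j)! : ℝ) := by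
    have := Nat.choose_mul_factorial_mul_factorial (show j ≤ 2*j by omega)
    rw [show 2*j - j = j by omega] at this
    exact_mod_cast congrArg (Nat.cast : ℕ → ℝ) this
  rw [poch_neg_nat n j hj, hP, hD]
  rw [neg_pow]
  field_simp
  linear_combination (-((-1)^j * x^j * (n.choose j : ℝ))) * hC
    - ((j ! : ℝ)^2 * (n.choose j : ℝ) * ((2*j).choose j : ℝ)) * neg_pow x j

theorem F_eq_legendre (n : ℕ) (x : ℝ) (hx : x ∈ Set.Ioo (0:ℝ) 1) :
    F n x = Real.sqrt (1 - x) ^ n *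
      legendreP n ((2 - x) / (2 * Real.sqrt (1 - x))) := by
  obtain ⟨hx0, hx1⟩ := hx
  set s := Real.sqrt (1 - x) with hs
  have hs0 : 0 < s := Real.sqrt_pos.mpr (by linarith)
  have hsne : s ≠ 0 := ne_of_gt hs0
  have hss : s^2 = 1 - x := Real.sq_sqrt (by linarith)
  have hy1 : (2 - x)/(2*s) - 1 = (1-s)^2/(2*s) := by
    field_simp
    nlinarith [hss]
  have hy2 : (2 - x)/(2*s) + 1 = (1+s)^2/(2*s) := by
    field_simp
    nlinarith [hss]
  have h4 : (4:ℝ)^n ≠ 0 := by positivity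
  apply mul_right_cancel₀ h4
  have hkey := key n (1+s) (1-s)
  have EqL : F n x * 4^n
      = ∑ k ∈ Finset.range (n+1),
          (n.choose k : ℝ) * (((1+s)+(1-s))^2)^(n-k)
            * ((-((1+s)*(1-s)))^k * ((2*k).choose k)) := by
    rw [F, Finset.sum_mul]
    refine Finset.sum_congr rfl fun k hk => ?_
    have hkn : k ≤ n := Nat.lt_succ_iff.mp (Finset.mem_range.mp hk)
    rw [F_term n k hkn x]
    have hbase : ((1+s)+(1-s))^2 = 4 := by ring
    have huv : -((1+s)*(1-s)) = -x := by linear_combination hss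
    rw [hbase, huv]
    have hpow : (4:ℝ)^(n-k) * 4^k = 4^n := by
      rw [← pow_add, Nat.sub_add_cancel hkn]
    field_simp
    linear_combination (-((n.choose k : ℝ) * ((2*k).choose k : ℝ) * (-x)^k)) * hpow
  rw [EqL, hkey, legendreP_eq, hy1, hy2]
  rw [Finset.mul_sum, Finset.mul_sum, Finset.sum_mul]
  refine Finset.sum_congr rfl fun k hk => ?_
  have hkn : k ≤ n := Nat.lt_succ_iff.mp (Finset.mem_range.mp hk)
  rw [Nat.sub_sub_self hkn, Nat.choose_symm hkn]
  have h2s : ((2*s):ℝ)^k * (2*s)^(n-k) = 2^n * s^n := by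
    rw [← pow_add, Nat.add_sub_cancel' hkn, mul_pow]
  rw [div_pow, div_pow]
  have h2sk : ((2*s):ℝ)^k ≠ 0 := by positivity
  have h2snk : ((2*s):ℝ)^(n-k) ≠ 0 := by positivity
  have h44 : (2:ℝ)^(n*2) = 4^n := by
    rw [show (4:ℝ) = 2^2 by norm_num, ← pow_mul, Nat.mul_comm]
  field_simp
  linear_combination ((n.choose k:ℝ)^2 * ((1-s)^2)^k * 2^n) * h2s
    + (s^n * (n.choose k:ℝ)^2 * ((1-s)^2)^k) * h44
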